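/- Let σ > 0, A ≥ 0, B ≥ 0, real constants M and C, and a natural number L ≥ 1. Then ∏_{ℓ=1}^{L−1} ( 1 + (A/σ)·exp(−((ℓ−1)/σ + M + C)/2) + (B/σ²)·exp(−((ℓ−1)/σ + M + C)) ) ≤ exp( 2·(A/σ)·e^{−(M+C)/2}·min(L, 1 + 2σ) + 2·(B/σ²)·e^{−(M+C)}·min(L, 1 + σ) ). In particular, the upper bound on the gradient-norm product grows at most like exp( O( e^{−M/2} · min{L, σ}/σ ) ), which is the upper bound asserted in Theorem 1. -/

import Mathlib

lemma sum_exp_le_min (t : ℝ) (ht : 0 < t) (n : ℕ) :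
    ∑ i ∈ Finset.range n, Real.exp (-(i : ℝ) / t) ≤ min (n : ℝ) (1 + t) := by
  have hr0 : (0:ℝ) ≤ Real.exp (-1/t) := (Real.exp_pos _).le
  have hr1 : Real.exp (-1/t) < 1 := by
    rw [Real.exp_lt_one_iff, neg_div]
    have : 0 < 1/t := by positivity
    linarith
  have hrw : ∀ i : ℕ, Real.exp (-(i : ℝ) / t) = Real.exp (-1/t) ^ i := by
    intro i
    rw [← Real.exp_nat_mul]
    ring_nf
  simp only [hrw]
  refine le_min ?_ ?_
  · calc ∑ i ∈ Finset.range n, Real.exp (-1/t) ^ i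
        ≤ ∑ _i ∈ Finset.range n, (1:ℝ) :=
          Finset.sum_le_sum fun i _ => pow_le_one₀ hr0 hr1.le
      _ = n := by simp
  · have hsum : ∑ i ∈ Finset.range n, Real.exp (-1/t) ^ i ≤ (1 - Real.exp (-1/t))⁻¹ := by
      rw [← tsum_geometric_of_lt_one hr0 hr1]
      exact Summable.sum_le_tsum _ (fun i _ => by positivity)
        (summable_geometric_of_lt_one hr0 hr1)
    refine hsum.trans ?_
    have he : Real.exp (-1/t) ≤ t/(t+1) := by
      have h2 : 1 + 1/t ≤ Real.exp (1/t) := by linarith [Real.add_one_le_exp (1/t)]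
      have : (Real.exp (1/t))⁻¹ ≤ (1 + 1/t)⁻¹ :=
        inv_anti₀ (by positivity) h2
      calc Real.exp (-1/t) = (Real.exp (1/t))⁻¹ := by
            rw [← Real.exp_neg]; ring_nf
        _ ≤ (1 + 1/t)⁻¹ := this
        _ = t/(t+1) := by field_simp
    have h1 : 1/(t+1) ≤ 1 - Real.exp (-1/t) := by
      have : 1 - t/(t+1) = 1/(t+1) := by field_simp; ring
      linarith
    calc (1 - Real.exp (-1/t))⁻¹ ≤ (1/(t+1))⁻¹ :=
          inv_anti₀ (by positivity) h1
      _ = t + 1 := by field_simp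
      _ = 1 + t := by ring

/-- Constant-variance gradient-norm upper bound for Pre-LN with GPAS,
combined with the geometric-ratio estimate: the product over layers `ℓ = 1, …, L−1`
(index `i = ℓ − 1` below) grows at most like `exp(O(e^{−M/2} · min{L, σ}/σ))`. -/
theorem gpas_gradient_product_upper_bound_min
    (σ A B M C : ℝ) (hσ : 0 < σ) (hA : 0 ≤ A) (hB : 0 ≤ B)
    (L : ℕ) (hL : 1 ≤ L) :
    ∏ i ∈ Finset.range (L - 1),
        (1 + (A / σ) * Real.exp (-(((i : ℝ)) / σ + M + C) / 2) +
          (B / σ ^ 2) * Real.exp (-((i : ℝ) / σ + M + C))) ≤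
      Real.exp
        (2 * (A / σ) * Real.exp (-(M + C) / 2) * min (L : ℝ) (1 + 2 * σ) +
          2 * (B / σ ^ 2) * Real.exp (-(M + C)) * min (L : ℝ) (1 + σ)) := by
  set K1 : ℝ := (A / σ) * Real.exp (-(M + C) / 2) with hK1
  set K2 : ℝ := (B / σ ^ 2) * Real.exp (-(M + C)) with hK2
  have hK1' : 0 ≤ K1 := by positivity
  have hK2' : 0 ≤ K2 := by positivity
  have hsplit : ∀ i : ℕ,
      (A / σ) * Real.exp (-(((i : ℝ)) / σ + M + C) / 2) =
        K1 * Real.exp (-(i : ℝ) / (2 * σ)) := by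
    intro i
    rw [hK1, mul_assoc, ← Real.exp_add]
    congr 2
    field_simp
    ring
  have hsplit2 : ∀ i : ℕ,
      (B / σ ^ 2) * Real.exp (-((i : ℝ) / σ + M + C)) =
        K2 * Real.exp (-(i : ℝ) / σ) := by
    intro i
    rw [hK2, mul_assoc, ← Real.exp_add]
    congr 2
    field_simp
    ring
  have step1 : ∏ i ∈ Finset.range (L - 1),
        (1 + (A / σ) * Real.exp (-(((i : ℝ)) / σ + M + C) / 2) +
          (B / σ ^ 2) * Real.exp (-((i : ℝ) / σ + M + C))) ≤
      Real.exp (∑ i ∈ Finset.range (L - 1),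
        (K1 * Real.exp (-(i : ℝ) / (2 * σ)) + K2 * Real.exp (-(i : ℝ) / σ))) := by
    rw [Real.exp_sum]
    refine Finset.prod_le_prod (fun i _ => by positivity) fun i _ => ?_
    rw [hsplit i, hsplit2 i]
    have := Real.add_one_le_exp
      (K1 * Real.exp (-(i : ℝ) / (2 * σ)) + K2 * Real.exp (-(i : ℝ) / σ))
    linarith
  refine step1.trans (Real.exp_le_exp.mpr ?_)
  rw [Finset.sum_add_distrib, ← Finset.mul_sum, ← Finset.mul_sum]
  have hcast : ((L - 1 : ℕ) : ℝ) ≤ (L : ℝ) := by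
    exact_mod_cast Nat.cast_le.mpr (Nat.sub_le L 1)
  have hmin1 : min ((L - 1 : ℕ) : ℝ) (1 + 2 * σ) ≤ min (L : ℝ) (1 + 2 * σ) :=
    min_le_min hcast le_rfl
  have hmin2 : min ((L - 1 : ℕ) : ℝ) (1 + σ) ≤ min (L : ℝ) (1 + σ) :=
    min_le_min hcast le_rfl
  have hminpos1 : 0 ≤ min (L : ℝ) (1 + 2 * σ) :=
    le_min (by exact_mod_cast Nat.zero_le L) (by linarith)
  have hminpos2 : 0 ≤ min (L : ℝ) (1 + σ) :=
    le_min (by exact_mod_cast Nat.zero_le L) (by linarith)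
  have hs1 := sum_exp_le_min (2 * σ) (by linarith) (L - 1)
  have hs2 := sum_exp_le_min σ hσ (L - 1)
  have b1 : K1 * ∑ i ∈ Finset.range (L - 1), Real.exp (-(i : ℝ) / (2 * σ)) ≤
      2 * (A / σ) * Real.exp (-(M + C) / 2) * min (L : ℝ) (1 + 2 * σ) := by
    have : K1 * ∑ i ∈ Finset.range (L - 1), Real.exp (-(i : ℝ) / (2 * σ)) ≤
        K1 * min (L : ℝ) (1 + 2 * σ) :=
      mul_le_mul_of_nonneg_left (hs1.trans hmin1) hK1'
    nlinarith [mul_nonneg hK1' hminpos1]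
  have b2 : K2 * ∑ i ∈ Finset.range (L - 1), Real.exp (-(i : ℝ) / σ) ≤
      2 * (B / σ ^ 2) * Real.exp (-(M + C)) * min (L : ℝ) (1 + σ) := by
    have : K2 * ∑ i ∈ Finset.range (L - 1), Real.exp (-(i : ℝ) / σ) ≤
        K2 * min (L : ℝ) (1 + σ) :=
      mul_le_mul_of_nonneg_left (hs2.trans hmin2) hK2'
    nlinarith [mul_nonneg hK2' hminpos2]
  linarith
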